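/- Let n ≥ 1 and let k_1, …, k_n ≥ 1 be integers such that the star-shaped graph Γ with branch lengths k_1, …, k_n is neither a Dynkin graph nor an extended Dynkin graph (i.e. it is not the case that n ≤ 2, nor that n = 3 with branch-length multiset {1,1,m} (m ≥ 1), {1,2,2}, {1,2,3} or {1,2,4}, nor that n = 4 with all branch lengths 1, nor that n = 3 with branch-length multiset {2,2,2}, {1,3,3} or {1,2,5}). Then the two solutions t_1 < t_2 of the equation n − 1 − t = Σ_{l=1}^n 1/(1 + t + ⋯ + t^{k_l}) in [0, ∞) satisfy t_1 · t_2 = 1. -/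

import Mathlib

open Finset

private lemma star_Spos {t : ℝ} (ht : 0 ≤ t) (k : ℕ) : 0 < ∑ i ∈ range (k+1), t ^ i := by
  have h0 : (1:ℝ) ≤ ∑ i ∈ range (k+1), t ^ i := by
    calc (1:ℝ) = t ^ 0 := by simp
    _ ≤ ∑ i ∈ range (k+1), t ^ i :=
      Finset.single_le_sum (f := fun i => t ^ i) (fun i _ => pow_nonneg ht i)
        (mem_range.mpr (Nat.succ_pos k))
  linarith

private lemma star_Srev {t : ℝ} (ht : 0 < t) (k : ℕ) :
    (∑ i ∈ range (k+1), (1/t) ^ i) * t ^ k = ∑ i ∈ range (k+1), t ^ i := by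
  rw [Finset.sum_mul, ← Finset.sum_range_reflect (fun i => t ^ i) (k+1)]
  refine Finset.sum_congr rfl fun i hi => ?_
  have hik : i ≤ k := by simpa [Nat.lt_succ_iff] using hi
  have h2 : t ^ (k + 1 - 1 - i) * t ^ i = t ^ k := by
    rw [← pow_add]; congr 1; omega
  field_simp
  rw [← h2, one_div, inv_pow, mul_comm ((t ^ i)⁻¹), mul_assoc,
    mul_inv_cancel₀ (pow_ne_zero _ ht.ne'), mul_one]

private lemma star_Sinv {t : ℝ} (ht : 0 < t) (k : ℕ) :
    1 / (∑ i ∈ range (k+1), (1/t) ^ i) = 1 - 1/t + (1/t) * (1 / ∑ i ∈ range (k+1), t ^ i) := by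
  have hS := star_Spos ht.le k
  have hS' := star_Spos (by positivity : (0:ℝ) ≤ 1/t) k
  have hrev := star_Srev ht k
  have hgeom := geom_sum_mul t (k+1)
  set S := ∑ i ∈ range (k+1), t ^ i with hSdef
  set S' := ∑ i ∈ range (k+1), (1/t) ^ i with hS'def
  have htk : (0:ℝ) < t ^ k := by positivity
  rw [show S' = S / t ^ k from by rw [← hrev]; field_simp, one_div_div]
  have h2 : (1:ℝ) - 1/t + (1/t)*(1/S) = ((t-1)*S + 1) / (S * t) := by
    field_simp
  have h1 : t ^ k / S = (t ^ k * t) / (S * t) := (mul_div_mul_right _ _ (ne_of_gt ht)).symm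
  rw [h1, h2]
  congr 1
  rw [← pow_succ]
  linear_combination -hgeom

private lemma star_symmE {n : ℕ} (k : Fin n → ℕ) {t : ℝ} (ht : 0 < t)
    (heq : (n:ℝ) - 1 - t = ∑ l : Fin n, 1 / ∑ i ∈ range (k l + 1), t ^ i) :
    (n:ℝ) - 1 - 1/t = ∑ l : Fin n, 1 / ∑ i ∈ range (k l + 1), (1/t) ^ i := by
  have h : ∑ l : Fin n, 1 / ∑ i ∈ range (k l + 1), (1/t) ^ i
      = ∑ l : Fin n, (1 - 1/t + (1/t) * (1 / ∑ i ∈ range (k l + 1), t ^ i)) :=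
    Finset.sum_congr rfl fun l _ => star_Sinv ht (k l)
  rw [h, Finset.sum_add_distrib, Finset.sum_sub_distrib, ← Finset.mul_sum, ← heq]
  simp only [Finset.sum_const, Finset.card_univ, Fintype.card_fin, nsmul_eq_mul]
  field_simp
  ring

private lemma star_chebS {a b : ℝ} (ha : 1 ≤ a) (hb : 1 ≤ b) (m : ℕ) :
    (m:ℝ) * (∑ i ∈ range m, b ^ i * a ^ (m - 1 - i))
      ≤ (∑ i ∈ range m, b ^ i) * (∑ i ∈ range m, a ^ i) := by
  have hanti : AntivaryOn (fun i => b ^ i) (fun i => a ^ (m - 1 - i)) (↑(range m) : Set ℕ) := by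
    intro i hi j hj hlt
    have h1 : m - 1 - i < m - 1 - j := by
      by_contra hcon
      exact absurd (pow_le_pow_right₀ ha (by omega)) (not_le.mpr hlt)
    have hji : j < i := by
      simp only [Finset.coe_range, Set.mem_Iio] at hi hj
      omega
    exact pow_le_pow_right₀ hb hji.le
  have := hanti.card_mul_sum_le_sum_mul_sum
  simpa [Finset.sum_range_reflect (fun i => a ^ i) m] using this

private lemma star_per_branch {a b : ℝ} (ha : 1 < a) (hab : a < b) (k : ℕ) :
    1/((a-1) * ∑ i ∈ range (k+1), a ^ i) - 1/((b-1) * ∑ i ∈ range (k+1), b ^ i)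
      ≤ (b - a) / (((k:ℝ)+1) * ((a-1)*(b-1))) := by
  have hb : 1 < b := ha.trans hab
  have hApos := star_Spos (by linarith : (0:ℝ) ≤ a) k
  have hBpos := star_Spos (by linarith : (0:ℝ) ≤ b) k
  set A := ∑ i ∈ range (k+1), a ^ i with hAdef
  set B := ∑ i ∈ range (k+1), b ^ i with hBdef
  set C := ∑ i ∈ range (k+1), b ^ i * a ^ (k + 1 - 1 - i) with hCdef
  have hA : A * (a - 1) = a ^ (k+1) - 1 := geom_sum_mul a (k+1)
  have hB' : B * (b - 1) = b ^ (k+1) - 1 := geom_sum_mul b (k+1)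
  have hC : C * (b - a) = b ^ (k+1) - a ^ (k+1) := geom_sum₂_mul b a (k+1)
  have hcheb : ((k:ℝ)+1) * C ≤ B * A := by
    have := star_chebS ha.le hb.le (k+1)
    push_cast at this
    exact this
  have e : (b-1)*B - (a-1)*A = (b-a)*C := by linear_combination hB' - hA - hC
  have h1 : (0:ℝ) < (a-1) * A := mul_pos (by linarith) hApos
  have h2 : (0:ℝ) < (b-1) * B := mul_pos (by linarith) hBpos
  have hpos : (0:ℝ) ≤ (b-a)*((a-1)*(b-1)) :=
    le_of_lt (mul_pos (by linarith) (mul_pos (by linarith) (by linarith)))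
  have main : (1 * ((b-1)*B) - (a-1)*A * 1) * (((k:ℝ)+1)*((a-1)*(b-1)))
      ≤ (b - a) * ((a-1)*A * ((b-1)*B)) := by
    calc (1 * ((b-1)*B) - (a-1)*A * 1) * (((k:ℝ)+1)*((a-1)*(b-1)))
        = ((b-a)*((a-1)*(b-1))) * (((k:ℝ)+1)*C) := by
          linear_combination (((k:ℝ)+1)*((a-1)*(b-1))) * e
      _ ≤ ((b-a)*((a-1)*(b-1))) * (B*A) := mul_le_mul_of_nonneg_left hcheb hpos
      _ = (b - a) * ((a-1)*A * ((b-1)*B)) := by ring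
  rw [div_sub_div _ _ h1.ne' h2.ne', div_le_div_iff₀ (mul_pos h1 h2)
    (mul_pos (by positivity) (mul_pos (by linarith) (by linarith)))]
  exact main

private lemma star_unique_gt {n : ℕ} (k : Fin n → ℕ) {a b : ℝ} (ha : 1 < a) (hab : a < b)
    (hsum : ∑ l : Fin n, (1:ℝ)/((k l : ℝ) + 1) < (n:ℝ) - 2)
    (heqa : (n:ℝ) - 1 - a = ∑ l : Fin n, 1 / ∑ i ∈ range (k l + 1), a ^ i)
    (heqb : (n:ℝ) - 1 - b = ∑ l : Fin n, 1 / ∑ i ∈ range (k l + 1), b ^ i) : False := by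
  have hb : 1 < b := ha.trans hab
  have hsum2 : ∑ l : Fin n,
      (1/((a-1) * ∑ i ∈ range (k l + 1), a ^ i) - 1/((b-1) * ∑ i ∈ range (k l + 1), b ^ i))
      ≤ ∑ l : Fin n, (b - a) / (((k l : ℝ)+1) * ((a-1)*(b-1))) :=
    Finset.sum_le_sum fun l _ => star_per_branch ha hab (k l)
  have eL : ∑ l : Fin n,
      (1/((a-1) * ∑ i ∈ range (k l + 1), a ^ i) - 1/((b-1) * ∑ i ∈ range (k l + 1), b ^ i))
      = ((n:ℝ) - 1 - a)/(a-1) - ((n:ℝ) - 1 - b)/(b-1) := by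
    rw [Finset.sum_sub_distrib, heqa, heqb, Finset.sum_div, Finset.sum_div]
    congr 1
    · exact Finset.sum_congr rfl fun l _ => by rw [div_div, mul_comm]
    · exact Finset.sum_congr rfl fun l _ => by rw [div_div, mul_comm]
  have eR : ∑ l : Fin n, (b - a) / (((k l : ℝ)+1) * ((a-1)*(b-1)))
      = ((b-a)/((a-1)*(b-1))) * ∑ l : Fin n, (1:ℝ)/((k l : ℝ) + 1) := by
    rw [Finset.mul_sum]
    refine Finset.sum_congr rfl fun l _ => ?_
    rw [div_mul_div_comm, mul_one, mul_comm]
  have hDpos : (0:ℝ) < (b-a)/((a-1)*(b-1)) :=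
    div_pos (by linarith) (mul_pos (by linarith) (by linarith))
  have h5 := mul_lt_mul_of_pos_left hsum hDpos
  have h6 : ((n:ℝ) - 1 - a)/(a-1) - ((n:ℝ) - 1 - b)/(b-1)
      = (b-a)/((a-1)*(b-1)) * ((n:ℝ) - 2) := by
    have h1 : a - 1 ≠ 0 := by linarith
    have h2 : b - 1 ≠ 0 := by linarith
    field_simp
    ring
  rw [eL, eR] at hsum2
  rw [h6] at hsum2
  linarith

private lemma star_bound3 (p q r : ℕ) (hq : 2 ≤ q) (hr : 2 ≤ r)
    (hineq : (p+1)*(q+1)*(r+1) ≤ (q+1)*(r+1) + (p+1)*(r+1) + (p+1)*(q+1)) : p ≤ 2 := by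
  by_contra h
  have hp3 : 3 ≤ p := by omega
  have hZ : ((p:ℤ)+1)*((q:ℤ)+1)*((r:ℤ)+1)
      ≤ ((q:ℤ)+1)*((r:ℤ)+1) + ((p:ℤ)+1)*((r:ℤ)+1) + ((p:ℤ)+1)*((q:ℤ)+1) := by
    exact_mod_cast hineq
  have ha : (0:ℤ) ≤ (p:ℤ)-3 := by
    have : (3:ℤ) ≤ (p:ℤ) := by exact_mod_cast hp3
    linarith
  have hb : (0:ℤ) ≤ (q:ℤ)-2 := by
    have : (2:ℤ) ≤ (q:ℤ) := by exact_mod_cast hq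
    linarith
  have hc : (0:ℤ) ≤ (r:ℤ)-2 := by
    have : (2:ℤ) ≤ (r:ℤ) := by exact_mod_cast hr
    linarith
  nlinarith [hZ, ha, hb, hc, mul_nonneg ha hb, mul_nonneg ha hc, mul_nonneg hb hc,
    mul_nonneg (mul_nonneg ha hb) hc]

private lemma star_msw (x y z : ℕ) : ({x, y, z} : Multiset ℕ) = {x, z, y} := by
  show x ::ₘ y ::ₘ z ::ₘ 0 = x ::ₘ z ::ₘ y ::ₘ 0
  rw [Multiset.cons_swap y z]

private lemma star_mrot (x y z : ℕ) : ({x, y, z} : Multiset ℕ) = {y, z, x} := by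
  show x ::ₘ y ::ₘ z ::ₘ 0 = y ::ₘ z ::ₘ x ::ₘ 0
  rw [Multiset.cons_swap x y, Multiset.cons_swap x z]

private lemma star_aux3 (p q r : ℕ) (hp : 1 ≤ p) (hq : 1 ≤ q) (hr : 1 ≤ r)
    (hineq : (p+1)*(q+1)*(r+1) ≤ (q+1)*(r+1) + (p+1)*(r+1) + (p+1)*(q+1)) :
    (∃ m, 1 ≤ m ∧ ({p, q, r} : Multiset ℕ) = {1, 1, m}) ∨
    ({p, q, r} : Multiset ℕ) = {1, 2, 2} ∨ ({p, q, r} : Multiset ℕ) = {1, 2, 3} ∨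
    ({p, q, r} : Multiset ℕ) = {1, 2, 4} ∨ ({p, q, r} : Multiset ℕ) = {2, 2, 2} ∨
    ({p, q, r} : Multiset ℕ) = {1, 3, 3} ∨ ({p, q, r} : Multiset ℕ) = {1, 2, 5} := by
  by_cases hp1 : p = 1 <;> by_cases hq1 : q = 1 <;> by_cases hr1 : r = 1
  · exact Or.inl ⟨1, le_refl 1, by subst hp1; subst hq1; subst hr1; rfl⟩
  · exact Or.inl ⟨r, hr, by subst hp1; subst hq1; rfl⟩
  · exact Or.inl ⟨q, hq, by subst hp1; subst hr1; exact star_msw 1 q 1⟩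
  · subst hp1
    have hq2 : 2 ≤ q := by omega
    have hr2 : 2 ≤ r := by omega
    have hqr : q * r ≤ q + r + 3 := by nlinarith [hineq]
    have hq5 : q ≤ 5 := by nlinarith [hqr, hq2, hr2]
    have hr5 : r ≤ 5 := by nlinarith [hqr, hq2, hr2]
    interval_cases q <;> interval_cases r <;>
      first
      | omega
      | (refine Or.inr (Or.inl ?_); decide)
      | (refine Or.inr (Or.inr (Or.inl ?_)); decide)
      | (refine Or.inr (Or.inr (Or.inr (Or.inl ?_))); decide)
      | (refine Or.inr (Or.inr (Or.inr (Or.inr (Or.inr (Or.inl ?_))))); decide)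
      | (refine Or.inr (Or.inr (Or.inr (Or.inr (Or.inr (Or.inr ?_))))); decide)
  · exact Or.inl ⟨p, hp, by subst hq1; subst hr1; exact star_mrot p 1 1⟩
  · subst hq1
    have hp2 : 2 ≤ p := by omega
    have hr2 : 2 ≤ r := by omega
    have hpr : p * r ≤ p + r + 3 := by nlinarith [hineq]
    have hp5 : p ≤ 5 := by nlinarith [hpr, hp2, hr2]
    have hr5 : r ≤ 5 := by nlinarith [hpr, hp2, hr2]
    interval_cases p <;> interval_cases r <;>
      first
      | omega
      | (refine Or.inr (Or.inl ?_); decide)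
      | (refine Or.inr (Or.inr (Or.inl ?_)); decide)
      | (refine Or.inr (Or.inr (Or.inr (Or.inl ?_))); decide)
      | (refine Or.inr (Or.inr (Or.inr (Or.inr (Or.inr (Or.inl ?_))))); decide)
      | (refine Or.inr (Or.inr (Or.inr (Or.inr (Or.inr (Or.inr ?_))))); decide)
  · subst hr1
    have hp2 : 2 ≤ p := by omega
    have hq2 : 2 ≤ q := by omega
    have hpq : p * q ≤ p + q + 3 := by nlinarith [hineq]
    have hp5 : p ≤ 5 := by nlinarith [hpq, hp2, hq2]
    have hq5 : q ≤ 5 := by nlinarith [hpq, hp2, hq2]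
    interval_cases p <;> interval_cases q <;>
      first
      | omega
      | (refine Or.inr (Or.inl ?_); decide)
      | (refine Or.inr (Or.inr (Or.inl ?_)); decide)
      | (refine Or.inr (Or.inr (Or.inr (Or.inl ?_))); decide)
      | (refine Or.inr (Or.inr (Or.inr (Or.inr (Or.inr (Or.inl ?_))))); decide)
      | (refine Or.inr (Or.inr (Or.inr (Or.inr (Or.inr (Or.inr ?_))))); decide)
  · have hp2 : 2 ≤ p := by omega
    have hq2 : 2 ≤ q := by omega
    have hr2 : 2 ≤ r := by omega
    have hp' : p ≤ 2 := star_bound3 p q r hq2 hr2 hineq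
    have hq' : q ≤ 2 := star_bound3 q p r hp2 hr2 (by linarith [hineq])
    have hr' : r ≤ 2 := star_bound3 r p q hp2 hq2 (by linarith [hineq])
    have hp3 : p = 2 := by omega
    have hq3 : q = 2 := by omega
    have hr3 : r = 2 := by omega
    subst hp3; subst hq3; subst hr3
    exact Or.inr (Or.inr (Or.inr (Or.inr (Or.inl rfl))))

/-- If the star-shaped graph with branch lengths `k_1, …, k_n` is neither a
Dynkin graph nor an extended Dynkin graph, then the two solutions `t₁ < t₂` of the equation
`n − 1 − t = Σ_{l=1}^n 1/(1 + t + ⋯ + t^{k_l})` in `[0, ∞)` satisfy `t₁ · t₂ = 1`. -/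
theorem stmt_4 (n : ℕ) (hn : 1 ≤ n) (k : Fin n → ℕ) (hk : ∀ l, 1 ≤ k l)
    (hnotDynkin : ¬ (n ≤ 2 ∨
      (n = 3 ∧
        ((∃ m : ℕ, 1 ≤ m ∧ Multiset.map k Finset.univ.val = {1, 1, m}) ∨
          Multiset.map k Finset.univ.val = {1, 2, 2} ∨
          Multiset.map k Finset.univ.val = {1, 2, 3} ∨
          Multiset.map k Finset.univ.val = {1, 2, 4}))))
    (hnotExtDynkin : ¬ ((n = 4 ∧ ∀ l, k l = 1) ∨
      (n = 3 ∧
        (Multiset.map k Finset.univ.val = {2, 2, 2} ∨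
          Multiset.map k Finset.univ.val = {1, 3, 3} ∨
          Multiset.map k Finset.univ.val = {1, 2, 5}))))
    (t₁ t₂ : ℝ) (ht₁ : 0 ≤ t₁) (ht₂ : 0 ≤ t₂) (h₁₂ : t₁ < t₂)
    (heq₁ : (n : ℝ) - 1 - t₁ = ∑ l : Fin n, 1 / ∑ i ∈ Finset.range (k l + 1), t₁ ^ i)
    (heq₂ : (n : ℝ) - 1 - t₂ = ∑ l : Fin n, 1 / ∑ i ∈ Finset.range (k l + 1), t₂ ^ i) :
    t₁ * t₂ = 1 := by
  have hn3 : 3 ≤ n := by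
    by_contra h
    exact hnotDynkin (Or.inl (by omega))
  -- Key bound: ∑ 1/(k l + 1) < n - 2
  have hsum : ∑ l : Fin n, (1:ℝ)/((k l : ℝ) + 1) < (n:ℝ) - 2 := by
    rcases (by omega : n = 3 ∨ n = 4 ∨ 5 ≤ n) with h3 | h4 | h5
    · subst h3
      by_contra hcon
      push_neg at hcon
      have hM : Multiset.map k Finset.univ.val = {k 0, k 1, k 2} := rfl
      have hA : (0:ℝ) < (k 0 : ℝ) + 1 := by positivity
      have hB : (0:ℝ) < (k 1 : ℝ) + 1 := by positivity
      have hC : (0:ℝ) < (k 2 : ℝ) + 1 := by positivity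
      have hs : (1:ℝ) ≤ 1/((k 0:ℝ)+1) + 1/((k 1:ℝ)+1) + 1/((k 2:ℝ)+1) := by
        rw [Fin.sum_univ_three] at hcon
        norm_num at hcon
        simpa [one_div] using hcon
      have hP : (0:ℝ) < ((k 0:ℝ)+1) * (((k 1:ℝ)+1) * ((k 2:ℝ)+1)) := by positivity
      have hmul := mul_le_mul_of_nonneg_right hs hP.le
      have hSP : (1/((k 0:ℝ)+1) + 1/((k 1:ℝ)+1) + 1/((k 2:ℝ)+1))
          * (((k 0:ℝ)+1) * (((k 1:ℝ)+1) * ((k 2:ℝ)+1)))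
          = ((k 1:ℝ)+1)*((k 2:ℝ)+1) + ((k 0:ℝ)+1)*((k 2:ℝ)+1) + ((k 0:ℝ)+1)*((k 1:ℝ)+1) := by
        field_simp
      rw [one_mul, hSP] at hmul
      have hnat : (k 0+1)*(k 1+1)*(k 2+1) ≤ (k 1+1)*(k 2+1) + (k 0+1)*(k 2+1) + (k 0+1)*(k 1+1) := by
        have : (((k 0+1)*(k 1+1)*(k 2+1) : ℕ) : ℝ)
            ≤ (((k 1+1)*(k 2+1) + (k 0+1)*(k 2+1) + (k 0+1)*(k 1+1) : ℕ) : ℝ) := by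
          push_cast
          nlinarith [hmul]
        exact_mod_cast this
      rcases star_aux3 (k 0) (k 1) (k 2) (hk 0) (hk 1) (hk 2) hnat with
        ⟨m, hm, he⟩ | hc | hc | hc | hc | hc | hc
      · exact hnotDynkin (Or.inr ⟨rfl, Or.inl ⟨m, hm, hM.trans he⟩⟩)
      · exact hnotDynkin (Or.inr ⟨rfl, Or.inr (Or.inl (hM.trans hc))⟩)
      · exact hnotDynkin (Or.inr ⟨rfl, Or.inr (Or.inr (Or.inl (hM.trans hc)))⟩)
      · exact hnotDynkin (Or.inr ⟨rfl, Or.inr (Or.inr (Or.inr (hM.trans hc)))⟩)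
      · exact hnotExtDynkin (Or.inr ⟨rfl, Or.inl (hM.trans hc)⟩)
      · exact hnotExtDynkin (Or.inr ⟨rfl, Or.inr (Or.inl (hM.trans hc))⟩)
      · exact hnotExtDynkin (Or.inr ⟨rfl, Or.inr (Or.inr (hM.trans hc))⟩)
    · subst h4
      have hex : ¬ ∀ l, k l = 1 := fun h => hnotExtDynkin (Or.inl ⟨rfl, h⟩)
      push_neg at hex
      obtain ⟨j, hj⟩ := hex
      have hj2 : 2 ≤ k j := by have := hk j; omega
      have hlt : ∑ l : Fin 4, (1:ℝ)/((k l:ℝ)+1) < ∑ _l : Fin 4, (1/2:ℝ) := by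
        refine Finset.sum_lt_sum (fun i _ => ?_) ⟨j, Finset.mem_univ j, ?_⟩
        · have h1 : (2:ℝ) ≤ (k i:ℝ)+1 := by
            have := hk i
            have : (1:ℝ) ≤ (k i : ℝ) := by exact_mod_cast this
            linarith
          exact one_div_le_one_div_of_le two_pos h1
        · have h1 : (2:ℝ) < (k j:ℝ)+1 := by
            have : (2:ℝ) ≤ (k j : ℝ) := by exact_mod_cast hj2
            linarith
          exact one_div_lt_one_div_of_lt two_pos h1
      rw [Finset.sum_const, Finset.card_univ, Fintype.card_fin] at hlt
      norm_num at hlt ⊢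
      linarith
    · have hle : ∑ l : Fin n, (1:ℝ)/((k l:ℝ)+1) ≤ ∑ _l : Fin n, (1/2:ℝ) := by
        refine Finset.sum_le_sum fun i _ => ?_
        have h1 : (2:ℝ) ≤ (k i:ℝ)+1 := by
          have : (1:ℝ) ≤ (k i : ℝ) := by exact_mod_cast hk i
          linarith
        exact one_div_le_one_div_of_le two_pos h1
      rw [Finset.sum_const, Finset.card_univ, Fintype.card_fin, nsmul_eq_mul] at hle
      have h5' : (5:ℝ) ≤ (n:ℝ) := by exact_mod_cast h5
      linarith
  -- t = 1 is not a solution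
  have hnot1 : ∀ t : ℝ,
      ((n : ℝ) - 1 - t = ∑ l : Fin n, 1 / ∑ i ∈ Finset.range (k l + 1), t ^ i) → t ≠ 1 := by
    intro t heq h1
    subst h1
    have hone : ∀ l : Fin n, ∑ i ∈ range (k l + 1), (1:ℝ) ^ i = (k l : ℝ) + 1 := by
      intro l
      simp [Finset.sum_const, Finset.card_range]
    rw [Finset.sum_congr rfl (fun l _ => by rw [hone l])] at heq
    linarith [hsum, heq]
  -- t₁ > 0
  have ht1pos : 0 < t₁ := by
    rcases eq_or_lt_of_le ht₁ with h0 | h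
    · exfalso
      rw [← h0] at heq₁
      have hzero : ∀ l : Fin n, ∑ i ∈ range (k l + 1), (0:ℝ) ^ i = 1 := by
        intro l
        rw [Finset.sum_range_succ']
        simp
      rw [Finset.sum_congr rfl (fun l _ => by rw [hzero l])] at heq₁
      simp at heq₁
    · exact h
  have ht2pos : 0 < t₂ := ht1pos.trans h₁₂
  rcases lt_trichotomy t₂ 1 with h2lt | h2eq | h2gt
  · exact absurd ((star_unique_gt k (one_lt_one_div ht2pos h2lt)
      (one_div_lt_one_div_of_lt ht1pos h₁₂) hsum
      (star_symmE k ht2pos heq₂) (star_symmE k ht1pos heq₁))) (fun h => h)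
  · exact absurd h2eq (hnot1 t₂ heq₂)
  · rcases lt_trichotomy t₁ 1 with h1lt | h1eq | h1gt
    · have hs1 := star_symmE k ht1pos heq₁
      have h11 : 1 < 1/t₁ := one_lt_one_div ht1pos h1lt
      rcases lt_trichotomy t₂ (1/t₁) with hx | hx | hx
      · exact (star_unique_gt k h2gt hx hsum heq₂ hs1).elim
      · rw [hx]
        field_simp
      · exact (star_unique_gt k h11 hx hsum hs1 heq₂).elim
    · exact absurd h1eq (hnot1 t₁ heq₁)
    · exact (star_unique_gt k h1gt h₁₂ hsum heq₁ heq₂).elim
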